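/- Each vector V_r = (x_{n+1}^r - x_n^r)·(Σ_{i=0}^{n} (∏_{j=i+1}^{n+1} A_j) 𝓩_i) + ∂/∂x_{n+1}^r, for r = 1,...,k+1, is orthogonal to every 𝓝_i, i = 0,...,n; i.e., V_r ∈ T_q𝓒. -/

import Mathlib

open scoped RealInnerProductSpace

/-- The ambient space `(ℝ^{k+1})^{n+2}` with its product inner product. -/
abbrev Config (k n : ℕ) :=
  PiLp 2 fun _ : Fin (n + 2) => EuclideanSpace ℝ (Fin (k + 1))

/-- The vector `𝓩_i`, with component `x_{i+1} - x_i` in slot `i` and `0` elsewhere. -/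
noncomputable def Zvec (k n : ℕ) (i : Fin (n + 1)) (q : Config k n) : Config k n :=
  (WithLp.equiv 2 _).symm fun m =>
    if m = i.castSucc then q i.succ - q i.castSucc else 0

/-- The `r`-th standard basis vector `∂/∂x_{n+1}^r` in the last slot. -/
noncomputable def Evec (k n : ℕ) (r : Fin (k + 1)) : Config k n :=
  (WithLp.equiv 2 _).symm fun m =>
    if m = Fin.last (n + 1) then EuclideanSpace.single r 1 else 0

/-- The vector `𝓝_i`, with component `-(x_{i+1} - x_i)` in slot `i`,
`(x_{i+1} - x_i)` in slot `i+1`, and `0` elsewhere. -/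
noncomputable def Nvec (k n : ℕ) (i : Fin (n + 1)) (q : Config k n) : Config k n :=
  (WithLp.equiv 2 _).symm fun m =>
    if m = i.castSucc then -(q i.succ - q i.castSucc)
    else if m = i.succ then q i.succ - q i.castSucc
    else 0

/-- `A_{j+1} = ⟨x_{j+2} - x_{j+1}, x_{j+1} - x_j⟩` (the paper's `A_j` for `j = 1,…,n`). -/
noncomputable def Aco (k n : ℕ) (j : Fin n) (q : Config k n) : ℝ :=
  ⟪q ⟨(j : ℕ) + 2, by have := j.isLt; omega⟩ -
      q ⟨(j : ℕ) + 1, by have := j.isLt; omega⟩,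
    q ⟨(j : ℕ) + 1, by have := j.isLt; omega⟩ -
      q ⟨(j : ℕ), by have := j.isLt; omega⟩⟫

/-- The product `∏_{j=i+1}^{n+1} A_j` (with `A_{n+1} = 1`), i.e. `∏_{j=i+1}^{n} A_j`. -/
noncomputable def coeff (k n : ℕ) (i : Fin (n + 1)) (q : Config k n) : ℝ :=
  ∏ j : Fin n, if (i : ℕ) ≤ (j : ℕ) then Aco k n j q else 1

/-- The generator `V_r = (x_{n+1}^r - x_n^r)·(Σ_i (∏_{j=i+1}^{n+1} A_j) 𝓩_i) + ∂/∂x_{n+1}^r`. -/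
noncomputable def Vvec (k n : ℕ) (r : Fin (k + 1)) (q : Config k n) : Config k n :=
  (q (Fin.last (n + 1)) r - q ⟨n, by omega⟩ r) •
      (∑ i : Fin (n + 1), coeff k n i q • Zvec k n i q) +
    Evec k n r

lemma inner_Zvec_Nvec (k n : ℕ) (m i : Fin (n + 1)) (q : Config k n) :
    ⟪Zvec k n m q, Nvec k n i q⟫ =
      if m = i then -⟪q i.succ - q i.castSucc, q i.succ - q i.castSucc⟫
      else if (m : ℕ) = (i : ℕ) + 1 then
        ⟪q m.succ - q m.castSucc, q i.succ - q i.castSucc⟫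
      else 0 := by
  simp only [Zvec, Nvec]
  rw [show (⟪(WithLp.equiv 2 _).symm (fun m' => if m' = m.castSucc then q m.succ - q m.castSucc else 0), (WithLp.equiv 2 _).symm (fun m' => if m' = i.castSucc then -(q i.succ - q i.castSucc) else if m' = i.succ then q i.succ - q i.castSucc else 0)⟫ : ℝ) = ∑ m', ⟪(if m' = m.castSucc then q m.succ - q m.castSucc else (0 : EuclideanSpace ℝ (Fin (k+1)))), (if m' = i.castSucc then -(q i.succ - q i.castSucc) else if m' = i.succ then q i.succ - q i.castSucc else 0)⟫ from PiLp.inner_apply _ _]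
  rw [Finset.sum_eq_single m.castSucc]
  · rw [if_pos rfl]
    by_cases h1 : m = i
    · subst h1
      rw [if_pos rfl, if_pos rfl, inner_neg_right]
    · have h1' : m.castSucc ≠ i.castSucc := by simpa [Fin.castSucc_inj] using h1
      rw [if_neg h1', if_neg h1]
      by_cases h2 : (m : ℕ) = (i : ℕ) + 1
      · have h3 : m.castSucc = i.succ := by ext; simpa using h2
        rw [if_pos h3, if_pos h2]
      · have h3 : m.castSucc ≠ i.succ := by
          intro h; apply h2; simpa using congrArg Fin.val h
        rw [if_neg h3, if_neg h2, inner_zero_right]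
  · intro b _ hb
    rw [if_neg hb, inner_zero_left]
  · simp
lemma inner_Evec_Nvec (k n : ℕ) (r : Fin (k + 1)) (i : Fin (n + 1)) (q : Config k n) :
    ⟪Evec k n r, Nvec k n i q⟫ =
      if (i : ℕ) = n then (q i.succ - q i.castSucc) r else 0 := by
  simp only [Evec, Nvec]
  rw [show (⟪(WithLp.equiv 2 _).symm (fun m' => if m' = Fin.last (n+1) then EuclideanSpace.single r 1 else 0), (WithLp.equiv 2 _).symm (fun m' => if m' = i.castSucc then -(q i.succ - q i.castSucc) else if m' = i.succ then q i.succ - q i.castSucc else 0)⟫ : ℝ) = ∑ m', ⟪(if m' = Fin.last (n+1) then EuclideanSpace.single r 1 else (0 : EuclideanSpace ℝ (Fin (k+1)))), (if m' = i.castSucc then -(q i.succ - q i.castSucc) else if m' = i.succ then q i.succ - q i.castSucc else 0)⟫ from PiLp.inner_apply _ _]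
  rw [Finset.sum_eq_single (Fin.last (n+1))]
  · rw [if_pos rfl]
    have hcast : Fin.last (n+1) ≠ i.castSucc := by
      intro h
      have := congrArg Fin.val h
      simp [Fin.last] at this
      omega
    rw [if_neg hcast]
    by_cases h2 : (i : ℕ) = n
    · have h3 : Fin.last (n+1) = i.succ := by ext; simp [Fin.last, h2]
      rw [if_pos h3, if_pos h2, EuclideanSpace.inner_single_left]
      simp
    · have h3 : Fin.last (n+1) ≠ i.succ := by
        intro h; apply h2
        have := congrArg Fin.val h
        simp [Fin.last] at this
        omega
      rw [if_neg h3, if_neg h2, inner_zero_right]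
  · intro b _ hb
    rw [if_neg hb, inner_zero_left]
  · simp
lemma coeff_last (k n : ℕ) (i : Fin (n + 1)) (hi : (i : ℕ) = n) (q : Config k n) :
    coeff k n i q = 1 := by
  unfold coeff
  apply Finset.prod_eq_one
  intro j _
  rw [if_neg]
  have := j.isLt; omega

lemma coeff_succ (k n : ℕ) (i : Fin (n + 1)) (hi : (i : ℕ) < n) (q : Config k n) :
    coeff k n i q =
      Aco k n ⟨(i : ℕ), hi⟩ q * coeff k n ⟨(i : ℕ) + 1, by omega⟩ q := by
  unfold coeff
  have key : ∀ j : Fin n,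
      (if (i : ℕ) ≤ (j : ℕ) then Aco k n j q else 1) =
        (if j = ⟨(i : ℕ), hi⟩ then Aco k n ⟨(i : ℕ), hi⟩ q else 1) *
          (if (i : ℕ) + 1 ≤ (j : ℕ) then Aco k n j q else 1) := by
    intro j
    by_cases h1 : j = (⟨(i : ℕ), hi⟩ : Fin n)
    · subst h1; simp
    · have h1' : (j : ℕ) ≠ (i : ℕ) := fun h => h1 (by ext; simp [h])
      rw [if_neg h1, one_mul]
      have : ((i : ℕ) ≤ (j : ℕ)) ↔ ((i : ℕ) + 1 ≤ (j : ℕ)) := by omega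
      by_cases h2 : (i : ℕ) + 1 ≤ (j : ℕ)
      · rw [if_pos h2, if_pos (this.mpr h2)]
      · rw [if_neg h2, if_neg (fun h => h2 (this.mp h))]
  rw [Finset.prod_congr rfl fun j _ => key j, Finset.prod_mul_distrib,
    Finset.prod_ite_eq' Finset.univ (⟨(i : ℕ), hi⟩ : Fin n)
      (fun _ => Aco k n ⟨(i : ℕ), hi⟩ q)]
  simp
theorem stmt6 (k n : ℕ) (hk : 1 ≤ k) (hn : 1 ≤ n) (q : Config k n)
    (hq : ∀ i : Fin (n + 1), ‖q i.succ - q i.castSucc‖ = 1) :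
    ∀ (r : Fin (k + 1)) (i : Fin (n + 1)), ⟪Vvec k n r q, Nvec k n i q⟫ = 0 := by
  intro r i
  have hvv : ∀ j : Fin (n + 1),
      (⟪q j.succ - q j.castSucc, q j.succ - q j.castSucc⟫ : ℝ) = 1 := by
    intro j
    rw [real_inner_self_eq_norm_mul_norm, hq j]; ring
  rw [Vvec, inner_add_left, real_inner_smul_left, sum_inner, inner_Evec_Nvec]
  simp only [real_inner_smul_left, inner_Zvec_Nvec]
  by_cases hi : (i : ℕ) = n
  · rw [if_pos hi, Finset.sum_eq_single i]
    · rw [if_pos rfl, hvv i, coeff_last k n i hi]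
      have h1 : i.succ = Fin.last (n + 1) := by ext; simp [Fin.last, hi]
      have h2 : i.castSucc = (⟨n, by omega⟩ : Fin (n + 2)) := by ext; simp [hi]
      rw [h1, h2]
      simp [PiLp.sub_apply]
    · intro m _ hm
      rw [if_neg hm, if_neg (by have := m.isLt; omega), mul_zero]
    · simp
  · rw [if_neg hi, add_zero]
    have hi' : (i : ℕ) < n := lt_of_le_of_ne (by have := i.isLt; omega) hi
    set i' : Fin (n + 1) := ⟨(i : ℕ) + 1, by omega⟩ with hi'def
    have key : ∀ m : Fin (n + 1),
        (coeff k n m q *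
          if m = i then -⟪q i.succ - q i.castSucc, q i.succ - q i.castSucc⟫
          else if (m : ℕ) = (i : ℕ) + 1 then
            ⟪q m.succ - q m.castSucc, q i.succ - q i.castSucc⟫
          else 0) =
        (if m = i then -(coeff k n i q) else 0) +
          (if m = i' then coeff k n i' q * Aco k n ⟨(i : ℕ), hi'⟩ q else 0) := by
      intro m
      by_cases h1 : m = i
      · subst h1
        rw [if_pos rfl, if_pos rfl, hvv, if_neg (by intro h; have := congrArg Fin.val h; simp [hi'def] at this), add_zero]
        ring
      · rw [if_neg h1, if_neg h1, zero_add]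
        by_cases h2 : m = i'
        · subst h2
          rw [if_pos rfl, if_pos (by simp [hi'def])]
          have hA : (⟪q i'.succ - q i'.castSucc, q i.succ - q i.castSucc⟫ : ℝ)
              = Aco k n ⟨(i : ℕ), hi'⟩ q := by
            rw [Aco]
            congr 1 <;> congr 1 <;> congr 1 <;> ext <;> simp [hi'def]
          rw [hA]
        · rw [if_neg h2, if_neg (by intro h; exact h2 (by ext; simp [hi'def, h])), mul_zero]
    rw [Finset.sum_congr rfl fun m _ => key m, Finset.sum_add_distrib,
      Finset.sum_ite_eq' Finset.univ i, Finset.sum_ite_eq' Finset.univ i',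
      if_pos (Finset.mem_univ i), if_pos (Finset.mem_univ i'),
      coeff_succ k n i hi' q]
    ring
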